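/- Let T be a uniformly random subset of {1,...,n} of cardinality ⌈n/2⌉, write T = {X_1 < X_2 < ... < X_{⌈n/2⌉}} and set X_0 = 1, X_{⌈n/2⌉+1} = n. Then with probability at least 1 − 1/n, every consecutive gap satisfies X_i − X_{i−1} ≤ 4⌈log₂ n⌉. -/

import Mathlib

open Finset

private lemma choose_step (N m : ℕ) (h : N + 1 ≤ 2 * m) :
    2 * N.choose m ≤ (N + 1).choose m := by
  rcases le_or_gt m N with hm | hm
  · have key := Nat.choose_mul_succ_eq N m
    have hpos : 0 < N + 1 - m := by omega
    have h2 : 2 * N.choose m * (N + 1 - m) ≤ (N + 1).choose m * (N + 1 - m) := by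
      calc 2 * N.choose m * (N + 1 - m)
          = N.choose m * (2 * (N + 1 - m)) := by ring
        _ ≤ N.choose m * (N + 1) := Nat.mul_le_mul_left _ (by omega)
        _ = (N + 1).choose m * (N + 1 - m) := key
    exact Nat.le_of_mul_le_mul_right h2 hpos
  · rw [Nat.choose_eq_zero_of_lt hm]; simp

private lemma pow_mul_choose_le (n m : ℕ) (hm : 1 ≤ m) (hnm : n ≤ 2 * m) :
    ∀ L, 2 ^ L * (n - L).choose m ≤ n.choose m := by
  intro L
  induction L with
  | zero => simp
  | succ L ih =>
    rcases le_or_gt (L + 1) n with hL | hL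
    · have h1 : n - (L + 1) + 1 = n - L := by omega
      have h2 : n - (L + 1) + 1 ≤ 2 * m := by omega
      have h3 := choose_step (n - (L + 1)) m h2
      rw [h1] at h3
      calc 2 ^ (L + 1) * (n - (L + 1)).choose m
          = 2 ^ L * (2 * (n - (L + 1)).choose m) := by ring
        _ ≤ 2 ^ L * (n - L).choose m := Nat.mul_le_mul_left _ h3
        _ ≤ n.choose m := ih
    · have h0 : n - (L + 1) = 0 := by omega
      rw [h0, Nat.choose_eq_zero_of_lt hm]
      simp

/-- If every element of a list lies in `[1, n]` and `n - 1 ≤ L`, then all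
consecutive gaps are at most `L`. -/
private lemma chain_of_small {l : List ℕ} {L n : ℕ}
    (hl : ∀ x ∈ l, 1 ≤ x ∧ x ≤ n) (h : n - 1 ≤ L) :
    l.IsChain (fun a b => b - a ≤ L) := by
  rw [List.isChain_iff_getElem]
  intro i hi
  have h1 := hl _ (List.getElem_mem (by omega : i < l.length))
  have h2 := hl _ (List.getElem_mem hi)
  omega

/-- From a failure of the chain condition on a strictly sorted list, extract a
pair of consecutive elements with a large gap and nothing in between. -/
private lemma exists_gap {L : ℕ} {l : List ℕ} (hpw : l.Pairwise (· < ·))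
    (hbad : ¬ l.IsChain (fun a b => b - a ≤ L)) :
    ∃ a b, a ∈ l ∧ b ∈ l ∧ a < b ∧ L < b - a ∧ ∀ x ∈ l, ¬(a < x ∧ x < b) := by
  rw [List.isChain_iff_getElem] at hbad
  push_neg at hbad
  obtain ⟨i, hi, hgap⟩ := hbad
  have hgap : L < l.get ⟨i + 1, hi⟩ - l.get ⟨i, by omega⟩ := hgap
  rw [List.pairwise_iff_get] at hpw
  refine ⟨_, _, List.get_mem l ⟨i, by omega⟩, List.get_mem l ⟨i + 1, hi⟩, ?_, hgap, ?_⟩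
  · exact hpw _ _ (by simp [Fin.lt_def])
  · rintro x hx ⟨hax, hxb⟩
    rw [List.mem_iff_get] at hx
    obtain ⟨k, hk⟩ := hx
    rcases lt_trichotomy (k : ℕ) i with h | h | h
    · have := hpw k ⟨i, by omega⟩ (by simpa [Fin.lt_def] using h)
      rw [hk] at this
      omega
    · have : k = (⟨i, by omega⟩ : Fin l.length) := Fin.ext h
      rw [this] at hk
      omega
    · have hk2 : i + 1 ≤ (k : ℕ) := h
      rcases lt_or_eq_of_le hk2 with h' | h'
      · have := hpw ⟨i + 1, by omega⟩ k (by simpa [Fin.lt_def] using h')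
        rw [hk] at this
        omega
      · have : (⟨i + 1, by omega⟩ : Fin l.length) = k := Fin.ext h'
        rw [← this] at hk
        omega

private lemma key_count (n : ℕ) (hn : 1 ≤ n) :
    n * (((Finset.Icc 1 n).powersetCard ((n + 1) / 2)).filter
          (fun (T : Finset ℕ) => ¬ List.IsChain (fun a b => b - a ≤ 4 * Nat.clog 2 n)
            ((insert n (insert 1 T)).sort (· ≤ ·)))).card
      ≤ ((Finset.Icc 1 n).powersetCard ((n + 1) / 2)).card := by
  set m := (n + 1) / 2 with hm
  set L := 4 * Nat.clog 2 n with hLdef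
  set S := Finset.Icc 1 n with hSdef
  set P := S.powersetCard m with hPdef
  have hScard : S.card = n := by simp [hSdef]
  have hPcard : P.card = n.choose m := by
    rw [hPdef, card_powersetCard, hScard]
  -- basic facts about members of P
  have hUmem : ∀ T ∈ P, ∀ x ∈ (insert n (insert 1 T) : Finset ℕ), 1 ≤ x ∧ x ≤ n := by
    intro T hT x hx
    rw [hPdef, mem_powersetCard] at hT
    simp only [mem_insert] at hx
    rcases hx with rfl | rfl | hx
    · omega
    · omega
    · have := hT.1 hx; rw [hSdef, mem_Icc] at this; omega
  rcases le_or_gt (n - 1) L with htriv | hbig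
  · -- trivial case: all gaps are at most n - 1 ≤ L
    have hempty : (P.filter (fun (T : Finset ℕ) => ¬ List.IsChain (fun a b => b - a ≤ L)
        ((insert n (insert 1 T)).sort (· ≤ ·)))) = ∅ := by
      rw [filter_eq_empty_iff]
      intro T hT
      rw [not_not]
      refine chain_of_small (n := n) ?_ htriv
      intro x hx
      exact hUmem T hT x ((Finset.mem_sort (· ≤ ·)).mp hx)
    rw [hempty]
    simp
  · -- main case
    have hn2 : 2 ≤ n := by omega
    have hL1 : 1 ≤ L := by
      have := Nat.clog_pos (b := 2) (by norm_num) hn2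
      omega
    -- the windows
    set W : ℕ → Finset ℕ := fun j => Finset.Icc j (j + L - 1) with hW
    -- bad sets are covered by the union of window-avoiding families
    have hcover : (P.filter (fun (T : Finset ℕ) => ¬ List.IsChain (fun a b => b - a ≤ L)
          ((insert n (insert 1 T)).sort (· ≤ ·))))
        ⊆ (Finset.Icc 2 (n - L)).biUnion (fun j => P.filter (fun T => Disjoint T (W j))) := by
      intro T hT
      rw [mem_filter] at hT
      obtain ⟨hTP, hbad⟩ := hT
      obtain ⟨a, b, haU, hbU, haltb, hgap, hbetween⟩ :=
        exists_gap (Finset.sortedLT_sort _).pairwise hbad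
      rw [Finset.mem_sort (· ≤ ·)] at haU hbU
      have hba := hUmem T hTP a haU
      have hbb := hUmem T hTP b hbU
      rw [mem_biUnion]
      refine ⟨a + 1, ?_, ?_⟩
      · rw [mem_Icc]; omega
      · rw [mem_filter]
        refine ⟨hTP, ?_⟩
        rw [Finset.disjoint_left]
        intro x hxT hxW
        rw [hW] at hxW
        simp only [mem_Icc] at hxW
        have hxU : x ∈ (insert n (insert 1 T) : Finset ℕ) :=
          mem_insert_of_mem (mem_insert_of_mem hxT)
        rw [← Finset.mem_sort (· ≤ ·)] at hxU
        exact hbetween x hxU ⟨by omega, by omega⟩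
    -- each family is small
    have hfam : ∀ j ∈ Finset.Icc 2 (n - L),
        (P.filter (fun T => Disjoint T (W j))).card ≤ (n - L).choose m := by
      intro j hj
      rw [mem_Icc] at hj
      have hWsub : W j ⊆ S := by
        rw [hW, hSdef]
        exact Finset.Icc_subset_Icc (by omega) (by omega)
      have hWcard : (W j).card = L := by
        rw [hW]; rw [Nat.card_Icc]; omega
      have hsub : (P.filter (fun T => Disjoint T (W j))) ⊆ (S \ W j).powersetCard m := by
        intro T hT
        rw [mem_filter, hPdef, mem_powersetCard] at hT
        rw [mem_powersetCard]
        exact ⟨Finset.subset_sdiff.mpr ⟨hT.1.1, hT.2⟩, hT.1.2⟩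
      calc (P.filter (fun T => Disjoint T (W j))).card
          ≤ ((S \ W j).powersetCard m).card := card_le_card hsub
        _ = ((S \ W j).card).choose m := card_powersetCard _ _
        _ = (n - L).choose m := by rw [card_sdiff_of_subset hWsub, hScard, hWcard]
    have hbadcard : (P.filter (fun (T : Finset ℕ) => ¬ List.IsChain (fun a b => b - a ≤ L)
          ((insert n (insert 1 T)).sort (· ≤ ·)))).card
        ≤ (n - L - 1) * (n - L).choose m := by
      calc (P.filter (fun (T : Finset ℕ) => ¬ List.IsChain (fun a b => b - a ≤ L)
            ((insert n (insert 1 T)).sort (· ≤ ·)))).card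
          ≤ ((Finset.Icc 2 (n - L)).biUnion
              (fun j => P.filter (fun T => Disjoint T (W j)))).card := card_le_card hcover
        _ ≤ ∑ j ∈ Finset.Icc 2 (n - L), (P.filter (fun T => Disjoint T (W j))).card :=
            card_biUnion_le
        _ ≤ ∑ _j ∈ Finset.Icc 2 (n - L), (n - L).choose m := Finset.sum_le_sum hfam
        _ = (Finset.Icc 2 (n - L)).card * (n - L).choose m := by
            rw [Finset.sum_const, smul_eq_mul]
        _ = (n - L - 1) * (n - L).choose m := by rw [Nat.card_Icc, show n - L + 1 - 2 = n - L - 1 from by omega]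
    have hclog : n ≤ 2 ^ Nat.clog 2 n := Nat.le_pow_clog (by norm_num) n
    have hpow : n * (n - L - 1) ≤ 2 ^ L := by
      calc n * (n - L - 1) ≤ n * n := Nat.mul_le_mul_left n (by omega)
        _ = n ^ 2 := by ring
        _ ≤ n ^ 4 := Nat.pow_le_pow_right hn (by norm_num)
        _ ≤ (2 ^ Nat.clog 2 n) ^ 4 := Nat.pow_le_pow_left hclog 4
        _ = 2 ^ L := by rw [hLdef, ← pow_mul, Nat.mul_comm]
    have hm1 : 1 ≤ m := by omega
    have hnm : n ≤ 2 * m := by omega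
    calc n * (P.filter (fun (T : Finset ℕ) => ¬ List.IsChain (fun a b => b - a ≤ L)
          ((insert n (insert 1 T)).sort (· ≤ ·)))).card
        ≤ n * ((n - L - 1) * (n - L).choose m) := Nat.mul_le_mul_left n hbadcard
      _ = (n * (n - L - 1)) * (n - L).choose m := by ring
      _ ≤ 2 ^ L * (n - L).choose m := Nat.mul_le_mul_right _ hpow
      _ ≤ n.choose m := pow_mul_choose_le n m hm1 hnm L
      _ = P.card := hPcard.symm

/-- Let `T` be a uniformly random subset of `{1,...,n}` of cardinality `⌈n/2⌉`.
With the sentinels `1` and `n` adjoined, with probability at least `1 - 1/n`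
every gap between consecutive elements (in increasing order) is at most
`4⌈log₂ n⌉`. -/
theorem random_subset_small_gaps (n : ℕ) (hn : 1 ≤ n) :
    (1 - 1 / (n : ℝ)) * (((Finset.Icc 1 n).powersetCard ((n + 1) / 2)).card : ℝ)
      ≤ ((((Finset.Icc 1 n).powersetCard ((n + 1) / 2)).filter
          (fun (T : Finset ℕ) => List.IsChain (fun a b => b - a ≤ 4 * Nat.clog 2 n)
            ((insert n (insert 1 T)).sort (· ≤ ·)))).card : ℝ) := by
  have hkey := key_count n hn
  set P := (Finset.Icc 1 n).powersetCard ((n + 1) / 2) with hP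
  have hsum := Finset.card_filter_add_card_filter_not
    (s := P) (p := fun (T : Finset ℕ) => List.IsChain (fun a b => b - a ≤ 4 * Nat.clog 2 n)
      ((insert n (insert 1 T)).sort (· ≤ ·)))
  have hnR : (0 : ℝ) < n := by exact_mod_cast hn
  have h1 : ((P.filter (fun (T : Finset ℕ) => ¬ List.IsChain (fun a b => b - a ≤ 4 * Nat.clog 2 n)
      ((insert n (insert 1 T)).sort (· ≤ ·)))).card : ℝ) * n ≤ (P.card : ℝ) := by
    have h := (Nat.cast_le (α := ℝ)).mpr hkey
    push_cast at h
    linarith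
  have h2 : ((P.filter (fun (T : Finset ℕ) => List.IsChain (fun a b => b - a ≤ 4 * Nat.clog 2 n)
        ((insert n (insert 1 T)).sort (· ≤ ·)))).card : ℝ)
      = (P.card : ℝ) - ((P.filter (fun (T : Finset ℕ) => ¬ List.IsChain (fun a b => b - a ≤ 4 * Nat.clog 2 n)
        ((insert n (insert 1 T)).sort (· ≤ ·)))).card : ℝ) := by
    have h := (Nat.cast_inj (R := ℝ)).mpr hsum
    push_cast at h
    linarith
  have h3 : ((P.filter (fun (T : Finset ℕ) => ¬ List.IsChain (fun a b => b - a ≤ 4 * Nat.clog 2 n)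
      ((insert n (insert 1 T)).sort (· ≤ ·)))).card : ℝ) ≤ (P.card : ℝ) / n := by
    rw [le_div_iff₀ hnR]
    exact h1
  have h4 : (1 - 1 / (n : ℝ)) * (P.card : ℝ) = (P.card : ℝ) - (P.card : ℝ) / n := by
    field_simp
  rw [h4, h2]
  linarith
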